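/- For every k ≥ 2 and ℓ with 2 ≤ ℓ ≤ k and d ≥ 2, there exists an unsatisfiable ℓ-disjoint (k,d)-CSP with at most c·(e·k²·ℓ^{-1}·ln(d)·d^k)^{1+1/(ℓ-1)} constraints, for some absolute constant c > 0. -/

import Mathlib

open Finset
open scoped Nat



-- greedy packing bound
lemma pack (n k ℓ : ℕ) (hl : 1 ≤ ℓ) (hlk : ℓ ≤ k) :
    ∃ S : Finset (Finset (Fin n)), (∀ s ∈ S, s.card = k) ∧
      (∀ s ∈ S, ∀ t ∈ S, s ≠ t → (s ∩ t).card < ℓ) ∧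
      n.choose k ≤ S.card * (k.choose ℓ * n.choose (k - ℓ)) := by
  classical
  set P : Finset (Finset (Fin n)) → Prop := fun S =>
    (∀ s ∈ S, s.card = k) ∧ (∀ s ∈ S, ∀ t ∈ S, s ≠ t → (s ∩ t).card < ℓ) with hP
  have hPdec : DecidablePred P := fun _ => by rw [hP]; infer_instance
  have hne : (Finset.univ.filter P).Nonempty := by
    refine ⟨∅, mem_filter.2 ⟨mem_univ _, ?_, ?_⟩⟩ <;> simp
  obtain ⟨S, hSmem, hSmax⟩ := (Finset.univ.filter P).exists_max_image Finset.card hne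
  have hSP : P S := (mem_filter.1 hSmem).2
  refine ⟨S, hSP.1, hSP.2, ?_⟩
  -- every k-set meets some member of S in ≥ ℓ points
  have hcover : ∀ t ∈ powersetCard k (univ : Finset (Fin n)), ∃ s ∈ S, ℓ ≤ (t ∩ s).card := by
    intro t ht
    have htk : t.card = k := (mem_powersetCard.1 ht).2
    by_cases hts : t ∈ S
    · exact ⟨t, hts, by simpa [htk] using hlk⟩
    by_contra hc
    push_neg at hc
    have hP' : P (insert t S) := by
      constructor
      · intro s hs
        rcases mem_insert.1 hs with h | h
        · simpa [h] using htk
        · exact hSP.1 s h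
      · intro s hs u hu hne'
        rcases mem_insert.1 hs with h | h <;> rcases mem_insert.1 hu with h' | h'
        · exact absurd (h.trans h'.symm) hne'
        · exact h ▸ hc u h'
        · rw [inter_comm]
          exact h' ▸ hc s h
        · exact hSP.2 s h u h' hne'
    have := hSmax (insert t S) (mem_filter.2 ⟨mem_univ _, hP'⟩)
    rw [card_insert_of_notMem hts] at this
    omega
  -- counting
  have hsub : powersetCard k (univ : Finset (Fin n)) ⊆
      S.biUnion (fun s => (powersetCard k (univ : Finset (Fin n))).filter
        (fun t => ℓ ≤ (t ∩ s).card)) := by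
    intro t ht
    obtain ⟨s, hs, hts⟩ := hcover t ht
    exact mem_biUnion.2 ⟨s, hs, mem_filter.2 ⟨ht, hts⟩⟩
  have hper : ∀ s ∈ S, ((powersetCard k (univ : Finset (Fin n))).filter
      (fun t => ℓ ≤ (t ∩ s).card)).card ≤ k.choose ℓ * n.choose (k - ℓ) := by
    intro s hs
    have hsk : s.card = k := hSP.1 s hs
    have hsub2 : (powersetCard k (univ : Finset (Fin n))).filter (fun t => ℓ ≤ (t ∩ s).card) ⊆
        (powersetCard ℓ s).biUnion (fun L => (powersetCard k (univ : Finset (Fin n))).filter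
          (fun t => L ⊆ t)) := by
      intro t ht
      obtain ⟨ht1, ht2⟩ := mem_filter.1 ht
      obtain ⟨L, hL, hLcard⟩ := Finset.exists_subset_card_eq ht2
      refine mem_biUnion.2 ⟨L, mem_powersetCard.2 ⟨hL.trans inter_subset_right, hLcard⟩,
        mem_filter.2 ⟨ht1, hL.trans inter_subset_left⟩⟩
    calc ((powersetCard k (univ : Finset (Fin n))).filter (fun t => ℓ ≤ (t ∩ s).card)).card
        ≤ ∑ L ∈ powersetCard ℓ s, ((powersetCard k (univ : Finset (Fin n))).filter
            (fun t => L ⊆ t)).card := (card_le_card hsub2).trans card_biUnion_le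
      _ ≤ ∑ L ∈ powersetCard ℓ s, n.choose (k - ℓ) := by
          refine sum_le_sum fun L hL => ?_
          obtain ⟨hLs, hLcard⟩ := mem_powersetCard.1 hL
          have : ((powersetCard k (univ : Finset (Fin n))).filter (fun t => L ⊆ t)).card
              ≤ (powersetCard (k - ℓ) (univ : Finset (Fin n))).card := by
            apply card_le_card_of_injOn (fun t => t \ L)
            · intro t ht
              obtain ⟨ht1, ht2⟩ := mem_filter.1 ht
              obtain ⟨_, htk⟩ := mem_powersetCard.1 ht1
              exact mem_powersetCard.2 ⟨subset_univ _, by rw [card_sdiff_of_subset ht2, htk, hLcard]⟩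
            · intro t ht u hu he
              obtain ⟨_, ht2⟩ := mem_filter.1 ht
              obtain ⟨_, hu2⟩ := mem_filter.1 hu
              have := congrArg (· ∪ L) he
              simpa [sdiff_union_of_subset ht2, sdiff_union_of_subset hu2] using this
          simpa [card_powersetCard, card_univ] using this
      _ = k.choose ℓ * n.choose (k - ℓ) := by
          rw [sum_const, card_powersetCard, hsk, smul_eq_mul]
  calc n.choose k = (powersetCard k (univ : Finset (Fin n))).card := by
        rw [card_powersetCard, card_univ, Fintype.card_fin]
    _ ≤ ∑ s ∈ S, ((powersetCard k (univ : Finset (Fin n))).filter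
          (fun t => ℓ ≤ (t ∩ s).card)).card := (card_le_card hsub).trans card_biUnion_le
    _ ≤ ∑ s ∈ S, (k.choose ℓ * n.choose (k - ℓ)) := sum_le_sum hper
    _ = S.card * (k.choose ℓ * n.choose (k - ℓ)) := by rw [sum_const, smul_eq_mul]

-- C(n,k) ≥ u^ℓ C(n,k-ℓ) when n ≥ k + k*u
lemma ratio (n k u : ℕ) (hn : k + k * u ≤ n) :
    ∀ ℓ ≤ k, u ^ ℓ * n.choose (k - ℓ) ≤ n.choose k := by
  intro ℓ
  induction ℓ with
  | zero => simp
  | succ ℓ ih =>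
    intro hlk
    have hih := ih (Nat.le_of_succ_le hlk)
    set j := k - (ℓ + 1) with hj
    have hj1 : j + 1 = k - ℓ := by omega
    -- u * C(n,j) ≤ C(n,j+1)
    have key : u * n.choose j ≤ n.choose (j + 1) := by
      have hid := Nat.choose_succ_right_eq n j
      have h1 : u * (j + 1) ≤ n - j := by
        have e1 : u * (j + 1) ≤ u * k := Nat.mul_le_mul_left u (by omega)
        have e2 : u * k = k * u := Nat.mul_comm u k
        have e3 : j ≤ k := by omega
        omega
      have h2 : u * n.choose j * (j + 1) ≤ n.choose (j + 1) * (j + 1) := by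
        calc u * n.choose j * (j + 1) = (u * (j + 1)) * n.choose j := by ring
          _ ≤ (n - j) * n.choose j := Nat.mul_le_mul_right _ h1
          _ = n.choose (j + 1) * (j + 1) := by rw [mul_comm, hid]
      exact Nat.le_of_mul_le_mul_right h2 (Nat.succ_pos j)
    calc u ^ (ℓ + 1) * n.choose (k - (ℓ + 1)) = u ^ ℓ * (u * n.choose j) := by
          rw [← hj]; ring
      _ ≤ u ^ ℓ * n.choose (j + 1) := Nat.mul_le_mul_left _ key
      _ = u ^ ℓ * n.choose (k - ℓ) := by rw [hj1]
      _ ≤ n.choose k := hih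


lemma agree_count (n k d : ℕ) (s : Finset (Fin n)) (hs : s.card = k)
    (α : Fin n → Fin d) :
    ((Finset.univ : Finset (Fin n → Fin d)).filter (fun f => ∀ x ∈ s, f x = α x)).card
      = d ^ (n - k) := by
  classical
  have h1 : (Finset.univ : Finset (Fin n → Fin d)).filter (fun f => ∀ x ∈ s, f x = α x)
      = Fintype.piFinset (fun x => if x ∈ s then {α x} else Finset.univ) := by
    ext f
    simp only [mem_filter, mem_univ, true_and, Fintype.mem_piFinset]
    constructor
    · intro h x
      by_cases hx : x ∈ s <;> simp [hx, h]
    · intro h x hx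
      have := h x
      simpa [hx] using this
  rw [h1, Fintype.card_piFinset]
  have h2 : ∀ x : Fin n, (if x ∈ s then ({α x} : Finset (Fin d)) else Finset.univ).card
      = if x ∈ s then 1 else d := by
    intro x; by_cases hx : x ∈ s <;> simp [hx]
  rw [Finset.prod_congr rfl (fun x _ => h2 x), Finset.prod_ite]
  simp only [prod_const, one_pow, one_mul]
  congr 1
  rw [Finset.filter_not, card_sdiff_of_subset (filter_subset _ _)]
  congr 1
  · simp [card_univ]
  · rw [← hs]; congr 1; ext x; simp

lemma first_moment (n k d : ℕ) (hd : 0 < d) (hkn : k ≤ n) (S : Finset (Finset (Fin n)))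
    (hcard : ∀ s ∈ S, s.card = k)
    (hlt : ((d : ℝ)) ^ n * ((d : ℝ) ^ n - (d : ℝ) ^ (n - k)) ^ S.card
      < ((d : ℝ) ^ n) ^ S.card) :
    ∃ c : Finset (Fin n) → (Fin n → Fin d),
      ∀ α : Fin n → Fin d, ∃ s ∈ S, ∀ x ∈ s, c s x = α x := by
  classical
  by_contra hcon
  push_neg at hcon
  -- for each c over the subtype, some α is avoided by all constraints
  have hcon' : ∀ c : {x // x ∈ S} → (Fin n → Fin d), ∃ α : Fin n → Fin d,
      ∀ s : {x // x ∈ S}, ∃ x ∈ s.1, c s x ≠ α x := by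
    intro c
    obtain ⟨α, hα⟩ := hcon (fun s => if h : s ∈ S then c ⟨s, h⟩ else fun _ => ⟨0, hd⟩)
    refine ⟨α, fun s => ?_⟩
    obtain ⟨x, hx, hne⟩ := hα s.1 s.2
    exact ⟨x, hx, by simpa [s.2] using hne⟩
  have hcov : (Finset.univ : Finset ({x // x ∈ S} → (Fin n → Fin d))) ⊆
      (Finset.univ : Finset (Fin n → Fin d)).biUnion (fun α =>
        Fintype.piFinset (fun s : {x // x ∈ S} =>
          Finset.univ.filter (fun f : Fin n → Fin d => ∃ x ∈ s.1, f x ≠ α x))) := by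
    intro c _
    obtain ⟨α, hα⟩ := hcon' c
    refine mem_biUnion.2 ⟨α, mem_univ _, Fintype.mem_piFinset.2 fun s => ?_⟩
    exact mem_filter.2 ⟨mem_univ _, hα s⟩
  have hbadcard : ∀ (α : Fin n → Fin d) (s : {x // x ∈ S}),
      (Finset.univ.filter (fun f : Fin n → Fin d => ∃ x ∈ s.1, f x ≠ α x)).card
        = d ^ n - d ^ (n - k) := by
    intro α s
    have : Finset.univ.filter (fun f : Fin n → Fin d => ∃ x ∈ s.1, f x ≠ α x)
        = Finset.univ \ Finset.univ.filter (fun f => ∀ x ∈ s.1, f x = α x) := by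
      rw [← Finset.filter_not]
      congr 1
      ext f
      push_neg
      rfl
    rw [this, card_sdiff_of_subset (filter_subset _ _), agree_count n k d s.1 (hcard s.1 s.2) α]
    congr 1
    simp [card_univ]
  -- cardinality comparison in ℕ
  have hcount : (d ^ n) ^ S.card ≤ d ^ n * (d ^ n - d ^ (n - k)) ^ S.card := by
    calc (d ^ n) ^ S.card
        = (Finset.univ : Finset ({x // x ∈ S} → (Fin n → Fin d))).card := by
          simp [card_univ, Fintype.card_fun]
      _ ≤ ∑ α : Fin n → Fin d, (Fintype.piFinset (fun s : {x // x ∈ S} =>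
            Finset.univ.filter (fun f : Fin n → Fin d => ∃ x ∈ s.1, f x ≠ α x))).card :=
          (card_le_card hcov).trans card_biUnion_le
      _ = ∑ _α : Fin n → Fin d, (d ^ n - d ^ (n - k)) ^ S.card := by
          refine Finset.sum_congr rfl fun α _ => ?_
          rw [Fintype.card_piFinset]
          rw [Finset.prod_congr rfl (fun s _ => hbadcard α s)]
          simp [card_univ]
      _ = d ^ n * (d ^ n - d ^ (n - k)) ^ S.card := by
          simp [card_univ]
  -- contradiction with the real inequality
  have hcast : ((d : ℝ) ^ n) ^ S.card ≤ (d : ℝ) ^ n * ((d : ℝ) ^ n - (d : ℝ) ^ (n - k)) ^ S.card := by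
    have hle : d ^ (n - k) ≤ d ^ n := Nat.pow_le_pow_right hd (Nat.sub_le n k)
    have := (Nat.cast_le (α := ℝ)).2 hcount
    push_cast [Nat.cast_sub hle] at this
    exact this
  exact absurd hcast (not_le.2 hlt)


lemma numeric (n k d b m : ℕ) (hd : 2 ≤ d) (hkn : k ≤ n) (hm : m = d ^ k * (n * b + 1))
    (hdb : (d : ℝ) ≤ Real.exp b) :
    (d : ℝ) ^ n * ((d : ℝ) ^ n - (d : ℝ) ^ (n - k)) ^ m < ((d : ℝ) ^ n) ^ m := by
  have hd1 : (1 : ℝ) ≤ (d : ℝ) := by exact_mod_cast Nat.one_le_of_lt hd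
  have hdk : (1 : ℝ) ≤ (d : ℝ) ^ k := one_le_pow₀ hd1
  have hdk0 : (0 : ℝ) < (d : ℝ) ^ k := lt_of_lt_of_le one_pos hdk
  have hdn0 : (0 : ℝ) < (d : ℝ) ^ n := pow_pos (lt_of_lt_of_le one_pos hd1) n
  have key : (d : ℝ) ^ n - (d : ℝ) ^ (n - k) = (d : ℝ) ^ n * (1 - ((d : ℝ) ^ k)⁻¹) := by
    have hsplit : (d : ℝ) ^ (n - k) = (d : ℝ) ^ n / (d : ℝ) ^ k := by
      rw [eq_div_iff (ne_of_gt hdk0), ← pow_add]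
      congr 1
      omega
    rw [hsplit]
    field_simp
  rw [key, mul_pow]
  have h1 : (0 : ℝ) ≤ 1 - ((d : ℝ) ^ k)⁻¹ := by
    have : ((d : ℝ) ^ k)⁻¹ ≤ 1 := inv_le_one_of_one_le₀ hdk
    linarith
  have h2 : (1 - ((d : ℝ) ^ k)⁻¹) ^ m ≤ Real.exp (-((m : ℝ) / (d : ℝ) ^ k)) := by
    have hstep : 1 - ((d : ℝ) ^ k)⁻¹ ≤ Real.exp (-(((d : ℝ) ^ k)⁻¹)) := by
      have := Real.add_one_le_exp (-(((d : ℝ) ^ k)⁻¹))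
      linarith
    calc (1 - ((d : ℝ) ^ k)⁻¹) ^ m ≤ (Real.exp (-(((d : ℝ) ^ k)⁻¹))) ^ m :=
          pow_le_pow_left₀ h1 hstep m
      _ = Real.exp (-((m : ℝ) / (d : ℝ) ^ k)) := by
          rw [← Real.exp_nat_mul]
          congr 1
          field_simp
  have h3 : (m : ℝ) / (d : ℝ) ^ k = (n : ℝ) * b + 1 := by
    rw [hm]
    push_cast
    field_simp
  have h4 : (d : ℝ) ^ n ≤ Real.exp ((n : ℝ) * b) := by
    calc (d : ℝ) ^ n ≤ (Real.exp b) ^ n := pow_le_pow_left₀ (by linarith) hdb n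
      _ = Real.exp ((n : ℝ) * b) := by rw [← Real.exp_nat_mul]
  calc (d : ℝ) ^ n * (((d : ℝ) ^ n) ^ m * (1 - ((d : ℝ) ^ k)⁻¹) ^ m)
      ≤ Real.exp ((n : ℝ) * b) * (((d : ℝ) ^ n) ^ m * Real.exp (-((n : ℝ) * b + 1))) := by
        rw [← h3]
        exact mul_le_mul h4 (mul_le_mul_of_nonneg_left h2 (le_of_lt (pow_pos hdn0 m)))
          (mul_nonneg (le_of_lt (pow_pos hdn0 m)) (pow_nonneg h1 m)) (Real.exp_nonneg _)
    _ = ((d : ℝ) ^ n) ^ m * Real.exp (-1) := by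
        rw [mul_comm, mul_assoc, ← Real.exp_add]
        ring_nf
    _ < ((d : ℝ) ^ n) ^ m := by
        nth_rewrite 2 [← mul_one (((d : ℝ) ^ n) ^ m)]
        exact mul_lt_mul_of_pos_left (by
          rw [Real.exp_lt_one_iff]; norm_num) (pow_pos hdn0 m)

lemma choose_le_exp (k ℓ : ℕ) (hl : 1 ≤ ℓ) :
    (k.choose ℓ : ℝ) ≤ (Real.exp 1 * k / ℓ) ^ ℓ := by
  have hl0 : (0 : ℝ) < (ℓ : ℝ) := by exact_mod_cast hl
  have hfac : (0 : ℝ) < ((ℓ)! : ℝ) := by exact_mod_cast Nat.factorial_pos ℓ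
  have hll : (0 : ℝ) < (ℓ : ℝ) ^ ℓ := by positivity
  have h1 : (k.choose ℓ : ℝ) ≤ (k : ℝ) ^ ℓ / (ℓ)! := by
    exact_mod_cast Nat.choose_le_pow_div ℓ k
  have h2 : (ℓ : ℝ) ^ ℓ / (ℓ)! ≤ Real.exp ℓ := by
    calc (ℓ : ℝ) ^ ℓ / (ℓ)! ≤ ∑ i ∈ Finset.range (ℓ + 1), (ℓ : ℝ) ^ i / (i)! := by
          refine Finset.single_le_sum (f := fun i => (ℓ : ℝ) ^ i / ((i)! : ℝ)) ?_ ?_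
          · intro i _
            positivity
          · exact Finset.self_mem_range_succ ℓ
      _ ≤ Real.exp ℓ := Real.sum_le_exp_of_nonneg (le_of_lt hl0) (ℓ + 1)
  have h3 : (((ℓ)!) : ℝ)⁻¹ ≤ Real.exp ℓ / (ℓ : ℝ) ^ ℓ := by
    rw [le_div_iff₀ hll, inv_mul_eq_div]
    exact h2
  calc (k.choose ℓ : ℝ) ≤ (k : ℝ) ^ ℓ / (ℓ)! := h1
    _ = (k : ℝ) ^ ℓ * (((ℓ)! : ℝ))⁻¹ := div_eq_mul_inv _ _
    _ ≤ (k : ℝ) ^ ℓ * (Real.exp ℓ / (ℓ : ℝ) ^ ℓ) :=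
        mul_le_mul_of_nonneg_left h3 (by positivity)
    _ = (Real.exp 1 * k / ℓ) ^ ℓ := by
        rw [div_pow, mul_pow, Real.exp_one_pow]
        ring

lemma clog_le_log (d : ℕ) (hd : 2 ≤ d) : (Nat.clog 2 d : ℝ) ≤ 3 * Real.log d := by
  have hb1 : 1 ≤ Nat.clog 2 d := Nat.clog_pos one_lt_two hd
  have hpow : (2 : ℕ) ^ (Nat.clog 2 d - 1) < d := Nat.pow_pred_clog_lt_self one_lt_two (by omega)
  have hpowR : (2 : ℝ) ^ (Nat.clog 2 d - 1) < (d : ℝ) := by exact_mod_cast hpow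
  have hlog : ((Nat.clog 2 d - 1 : ℕ) : ℝ) * Real.log 2 ≤ Real.log d := by
    rw [← Real.log_pow]
    exact Real.log_le_log (by positivity) (le_of_lt hpowR)
  have hcast : ((Nat.clog 2 d - 1 : ℕ) : ℝ) = (Nat.clog 2 d : ℝ) - 1 := by
    push_cast [hb1]
    ring
  rw [hcast] at hlog
  have hL2 : (0.6931471803 : ℝ) < Real.log 2 := Real.log_two_gt_d9
  have hLd : Real.log 2 ≤ Real.log d := Real.log_le_log (by norm_num) (by exact_mod_cast hd)
  nlinarith [hlog, hL2, hLd]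

lemma le_exp_clog (d : ℕ) (hd : 2 ≤ d) : (d : ℝ) ≤ Real.exp (Nat.clog 2 d) := by
  have h1 : d ≤ 2 ^ Nat.clog 2 d := Nat.le_pow_clog one_lt_two d
  have h2 : (d : ℝ) ≤ (2 : ℝ) ^ Nat.clog 2 d := by exact_mod_cast h1
  calc (d : ℝ) ≤ (2 : ℝ) ^ Nat.clog 2 d := h2
    _ ≤ (Real.exp 1) ^ Nat.clog 2 d := by
        apply pow_le_pow_left₀ (by norm_num)
        have := Real.exp_one_gt_d9
        linarith
    _ = Real.exp (Nat.clog 2 d) := Real.exp_one_pow _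

/-- There is an absolute constant c > 0 such that for all 2 ≤ ℓ ≤ k and d ≥ 2
there exists an unsatisfiable ℓ-disjoint (k,d)-CSP with at most
c·(e·k²·ℓ⁻¹·ln(d)·d^k)^{1+1/(ℓ-1)} constraints. -/
theorem stmt14 :
    ∃ c : ℝ, 0 < c ∧ ∀ k ℓ d : ℕ, 2 ≤ ℓ → ℓ ≤ k → 2 ≤ d →
      ∃ F : Finset (Finset (ℕ × Fin d)),
        (∀ C ∈ F, C.card = k ∧ (C.image Prod.fst).card = k) ∧
        (∀ C ∈ F, ∀ D ∈ F, C ≠ D →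
          ((C.image Prod.fst) ∩ (D.image Prod.fst)).card < ℓ) ∧
        (∀ α : ℕ → Fin d, ∃ C ∈ F, ∀ p ∈ C, α p.1 = p.2) ∧
        (F.card : ℝ)
          ≤ c * (Real.exp 1 * (k : ℝ) ^ 2 * (ℓ : ℝ)⁻¹ * Real.log d * (d : ℝ) ^ k)
              ^ (1 + ((ℓ : ℝ) - 1)⁻¹) := by
  classical
  refine ⟨162, by norm_num, ?_⟩
  intro k ℓ d hl2 hlk hd2
  have hk2 : 2 ≤ k := le_trans hl2 hlk
  have hd0 : 0 < d := by omega
  set b : ℕ := Nat.clog 2 d with hbdef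
  have hb1 : 1 ≤ b := Nat.clog_pos one_lt_two hd2
  set A : ℕ := 3 * k * b * d ^ k * k.choose ℓ with hAdef
  have hCpos : 0 < k.choose ℓ := Nat.choose_pos hlk
  have hA1 : 1 ≤ A := by
    have h1 : 0 < d ^ k := pow_pos hd0 k
    have : 0 < A := by positivity
    omega
  set y : ℝ := ((ℓ : ℝ) - 1)⁻¹ with hydef
  have hl1R : (1 : ℝ) ≤ (ℓ : ℝ) - 1 := by
    have : (2 : ℝ) ≤ (ℓ : ℝ) := by exact_mod_cast hl2
    linarith
  have hy0 : 0 < y := by rw [hydef]; positivity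
  have hy1 : y ≤ 1 := by
    rw [hydef]
    exact inv_le_one_of_one_le₀ hl1R
  have hlne : ((ℓ : ℝ) - 1) ≠ 0 := by linarith
  have hyl : ((ℓ : ℝ) - 1) * y = 1 := mul_inv_cancel₀ hlne
  have hA1R : (1 : ℝ) ≤ (A : ℝ) := by exact_mod_cast hA1
  set u : ℕ := ⌈(A : ℝ) ^ y⌉₊ with hudef
  have hAy0 : (0 : ℝ) ≤ (A : ℝ) ^ y := Real.rpow_nonneg (by positivity) y
  have hAy1 : (1 : ℝ) ≤ (A : ℝ) ^ y := Real.one_le_rpow hA1R (le_of_lt hy0)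
  have hu1 : 1 ≤ u := by
    have : (1 : ℝ) ≤ (u : ℝ) := le_trans hAy1 (Nat.le_ceil _)
    exact_mod_cast this
  have huU : (u : ℝ) ≤ 2 * (A : ℝ) ^ y := by
    have h := Nat.ceil_lt_add_one hAy0
    have : (u : ℝ) < (A : ℝ) ^ y + 1 := h
    linarith
  -- A ≤ u ^ (ℓ - 1) over ℕ
  have hlcast : ((ℓ - 1 : ℕ) : ℝ) = (ℓ : ℝ) - 1 := by
    have : 1 ≤ ℓ := by omega
    push_cast [this]
    ring
  have huA : A ≤ u ^ (ℓ - 1) := by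
    have h1 : ((A : ℝ) ^ y) ^ (ℓ - 1 : ℕ) ≤ (u : ℝ) ^ (ℓ - 1 : ℕ) :=
      pow_le_pow_left₀ hAy0 (Nat.le_ceil _) _
    have h2 : ((A : ℝ) ^ y) ^ (ℓ - 1 : ℕ) = (A : ℝ) := by
      rw [← Real.rpow_natCast ((A : ℝ) ^ y) (ℓ - 1), ← Real.rpow_mul (by positivity), hlcast]
      rw [show y * ((ℓ : ℝ) - 1) = 1 by rw [mul_comm]; exact hyl, Real.rpow_one]
    rw [h2] at h1
    exact_mod_cast h1
  set n : ℕ := k + k * u with hndef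
  set m : ℕ := d ^ k * (n * b + 1) with hmdef
  have hkn : k ≤ n := Nat.le_add_right _ _
  -- key nat inequality
  have hnb : n * b + 1 ≤ 3 * k * u * b := by
    have hku : k ≤ k * u := Nat.le_mul_of_pos_right k hu1
    have h1 : n ≤ 2 * (k * u) := by omega
    have h2 : n * b ≤ 2 * (k * u) * b := Nat.mul_le_mul_right b h1
    have h3 : 1 ≤ k * u * b := by
      have : 0 < k * u * b := by positivity
      omega
    have e1 : 2 * (k * u) * b = 2 * (k * u * b) := by ring
    have e2 : 3 * k * u * b = 3 * (k * u * b) := by ring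
    omega
  -- design
  obtain ⟨S₀, hS₀k, hS₀dis, hS₀cnt⟩ := pack n k ℓ (by omega) hlk
  have hratio := ratio n k u (le_of_eq hndef.symm) ℓ hlk
  have hC2pos : 0 < n.choose (k - ℓ) := Nat.choose_pos (by omega)
  have hmC : m * k.choose ℓ ≤ u ^ ℓ := by
    calc m * k.choose ℓ = (n * b + 1) * (d ^ k * k.choose ℓ) := by rw [hmdef]; ring
      _ ≤ (3 * k * u * b) * (d ^ k * k.choose ℓ) := Nat.mul_le_mul_right _ hnb
      _ = u * A := by rw [hAdef]; ring
      _ ≤ u * u ^ (ℓ - 1) := Nat.mul_le_mul_left _ huA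
      _ = u ^ ℓ := by
          rw [← pow_succ']
          congr 1
          omega
  have hmS : m ≤ S₀.card := by
    have h2 : u ^ ℓ * n.choose (k - ℓ) ≤ (S₀.card * k.choose ℓ) * n.choose (k - ℓ) := by
      calc u ^ ℓ * n.choose (k - ℓ) ≤ n.choose k := hratio
        _ ≤ S₀.card * (k.choose ℓ * n.choose (k - ℓ)) := hS₀cnt
        _ = (S₀.card * k.choose ℓ) * n.choose (k - ℓ) := by ring
    have h3 : u ^ ℓ ≤ S₀.card * k.choose ℓ := Nat.le_of_mul_le_mul_right h2 hC2pos
    have h4 : m * k.choose ℓ ≤ (S₀.card) * k.choose ℓ := le_trans hmC h3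
    exact Nat.le_of_mul_le_mul_right h4 hCpos
  obtain ⟨S, hSsub, hScard⟩ := Finset.exists_subset_card_eq hmS
  have hSk : ∀ s ∈ S, s.card = k := fun s hs => hS₀k s (hSsub hs)
  obtain ⟨c, hc⟩ := first_moment n k d hd0 hkn S hSk
    (by rw [hScard]; exact numeric n k d b m hd2 hkn hmdef (le_exp_clog d hd2))
  -- build the CSP
  have hinj : ∀ s : Finset (Fin n), Function.Injective (fun x : Fin n => ((x : ℕ), c s x)) := by
    intro s x x' h
    exact Fin.val_injective (congrArg Prod.fst h)
  set F : Finset (Finset (ℕ × Fin d)) :=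
    S.image (fun s => s.image (fun x : Fin n => ((x : ℕ), c s x))) with hFdef
  have himgfst : ∀ s : Finset (Fin n),
      (s.image (fun x : Fin n => ((x : ℕ), c s x))).image Prod.fst = s.image (fun x : Fin n => (x : ℕ)) := by
    intro s
    rw [Finset.image_image]
    rfl
  refine ⟨F, ?_, ?_, ?_, ?_⟩
  · intro C hC
    obtain ⟨s, hs, rfl⟩ := Finset.mem_image.1 hC
    constructor
    · rw [Finset.card_image_of_injective _ (hinj s)]
      exact hSk s hs
    · rw [himgfst s, Finset.card_image_of_injective _ Fin.val_injective]
      exact hSk s hs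
  · intro C hC D hD hne
    obtain ⟨s, hs, rfl⟩ := Finset.mem_image.1 hC
    obtain ⟨t, ht, rfl⟩ := Finset.mem_image.1 hD
    have hst : s ≠ t := by
      rintro rfl
      exact hne rfl
    rw [himgfst s, himgfst t, ← Finset.image_inter s t Fin.val_injective,
      Finset.card_image_of_injective _ Fin.val_injective]
    exact hS₀dis s (hSsub hs) t (hSsub ht) hst
  · intro α
    obtain ⟨s, hs, hag⟩ := hc (fun i => α (i : ℕ))
    refine ⟨s.image (fun x : Fin n => ((x : ℕ), c s x)), Finset.mem_image_of_mem _ hs, ?_⟩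
    intro p hp
    obtain ⟨x, hx, rfl⟩ := Finset.mem_image.1 hp
    exact (hag x hx).symm
  · -- cardinality bound
    have hFm : (F.card : ℝ) ≤ (m : ℝ) := by
      have : F.card ≤ S.card := Finset.card_image_le
      rw [hScard] at this
      exact_mod_cast this
    have hdkR : (0 : ℝ) < (d : ℝ) ^ k := by positivity
    have hlogd : (0 : ℝ) < Real.log d := Real.log_pos (by exact_mod_cast hd2)
    set E : ℝ := Real.exp 1 * (k : ℝ) / (ℓ : ℝ) with hEdef
    set B : ℝ := Real.exp 1 * (k : ℝ) ^ 2 * (ℓ : ℝ)⁻¹ * Real.log d * (d : ℝ) ^ k with hBdef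
    have hkR : (0 : ℝ) < (k : ℝ) := by positivity
    have hlR : (0 : ℝ) < (ℓ : ℝ) := by
      have : 0 < ℓ := by omega
      exact_mod_cast this
    have hE0 : (0 : ℝ) < E := by rw [hEdef]; positivity
    have hB0 : (0 : ℝ) < B := by
      rw [hBdef]
      have := Real.exp_pos 1
      positivity
    have hEB : E * (k : ℝ) * Real.log d * (d : ℝ) ^ k = B := by
      rw [hEdef, hBdef, div_eq_mul_inv]
      ring
    -- bound m in ℝ
    have hmR : (m : ℝ) ≤ 3 * (k : ℝ) * (u : ℝ) * (b : ℝ) * (d : ℝ) ^ k := by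
      have h1 : m ≤ d ^ k * (3 * k * u * b) := Nat.mul_le_mul_left _ hnb
      have h2 : (m : ℝ) ≤ ((d : ℝ)) ^ k * (3 * (k : ℝ) * (u : ℝ) * (b : ℝ)) := by
        exact_mod_cast h1
      linarith [h2]
    have hbR : (b : ℝ) ≤ 3 * Real.log d := clog_le_log d hd2
    -- A ≤ 9 E^(ℓ-1) B in ℝ
    have hchoose : (k.choose ℓ : ℝ) ≤ E ^ ℓ := by
      rw [hEdef]
      exact choose_le_exp k ℓ (by omega)
    have hAR : (A : ℝ) ≤ 9 * E ^ (ℓ - 1) * B := by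
      have hAR0 : (A : ℝ) = 3 * (k : ℝ) * (b : ℝ) * (d : ℝ) ^ k * (k.choose ℓ : ℝ) := by
        rw [hAdef]
        push_cast
        ring
      have hEl : E ^ ℓ = E ^ (ℓ - 1) * E := by
        rw [← pow_succ]
        congr 1
        omega
      calc (A : ℝ) = 3 * (k : ℝ) * (b : ℝ) * (d : ℝ) ^ k * (k.choose ℓ : ℝ) := hAR0
        _ ≤ 3 * (k : ℝ) * (3 * Real.log d) * (d : ℝ) ^ k * (E ^ ℓ) := by
            gcongr
        _ = 9 * E ^ (ℓ - 1) * (E * (k : ℝ) * Real.log d * (d : ℝ) ^ k) := by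
            rw [hEl]; ring
        _ = 9 * E ^ (ℓ - 1) * B := by rw [hEB]
    -- rpow manipulation
    have hEpow : (E ^ (ℓ - 1 : ℕ) : ℝ) ^ y = E := by
      rw [← Real.rpow_natCast E (ℓ - 1), ← Real.rpow_mul (le_of_lt hE0), hlcast,
        hyl, Real.rpow_one]
    have hBy0 : (0 : ℝ) ≤ B ^ y := le_of_lt (Real.rpow_pos_of_pos hB0 y)
    have hAy : (A : ℝ) ^ y ≤ 9 * E * B ^ y := by
      calc (A : ℝ) ^ y ≤ (9 * E ^ (ℓ - 1) * B) ^ y :=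
            Real.rpow_le_rpow (by positivity) hAR (le_of_lt hy0)
        _ = (9 : ℝ) ^ y * (E ^ (ℓ - 1) : ℝ) ^ y * B ^ y := by
            rw [Real.mul_rpow (by positivity) (le_of_lt hB0),
              Real.mul_rpow (by norm_num) (by positivity)]
        _ = (9 : ℝ) ^ y * E * B ^ y := by rw [hEpow]
        _ ≤ 9 * E * B ^ y := by
            have h9 : (9 : ℝ) ^ y ≤ 9 := by
              calc (9 : ℝ) ^ y ≤ (9 : ℝ) ^ (1 : ℝ) :=
                    Real.rpow_le_rpow_of_exponent_le (by norm_num) hy1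
                _ = 9 := Real.rpow_one 9
            exact mul_le_mul_of_nonneg_right
              (mul_le_mul_of_nonneg_right h9 (le_of_lt hE0)) hBy0
    calc (F.card : ℝ) ≤ (m : ℝ) := hFm
      _ ≤ 3 * (k : ℝ) * (u : ℝ) * (b : ℝ) * (d : ℝ) ^ k := hmR
      _ ≤ 3 * (k : ℝ) * (2 * (A : ℝ) ^ y) * (3 * Real.log d) * (d : ℝ) ^ k := by
          gcongr
      _ = 18 * (k : ℝ) * Real.log d * (d : ℝ) ^ k * ((A : ℝ) ^ y) := by ring
      _ ≤ 18 * (k : ℝ) * Real.log d * (d : ℝ) ^ k * (9 * E * B ^ y) := by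
          gcongr
      _ = 162 * (E * (k : ℝ) * Real.log d * (d : ℝ) ^ k) * B ^ y := by ring
      _ = 162 * (B * B ^ y) := by rw [hEB]; ring
      _ = 162 * B ^ ((1 : ℝ) + y) := by
          rw [Real.rpow_add hB0, Real.rpow_one]
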